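/- Let n, m be natural numbers and let x, y ∈ (ZMod 2)^n with x ≠ y. Then the probability, over a uniformly random pair (A, b) where A is an m×n matrix over ZMod 2 and b ∈ (ZMod 2)^m, that both A·x = b and A·y = b hold equals 2^(-2m). -/
import Mathlib


open Finset Filter
open scoped Classical

/-- Probability of event `P` over a uniformly random pair `(A, b)` with `A` an
`m × n` matrix over `ZMod 2` and `b : Fin m → ZMod 2`. -/
noncomputable def xorProb (n m : ℕ)
    (P : Matrix (Fin m) (Fin n) (ZMod 2) × (Fin m → ZMod 2) → Prop) : ℝ :=
  (Finset.univ.filter P).card /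
    Fintype.card (Matrix (Fin m) (Fin n) (ZMod 2) × (Fin m → ZMod 2))

/-- The random 1-CARD-XOR formula `ψ(n,k,m)` is satisfied by the pair `(A, b)`:
there is an assignment of Hamming weight at most `k` solving `A ⬝ x = b`. -/
def cardXorSat (n k m : ℕ)
    (ab : Matrix (Fin m) (Fin n) (ZMod 2) × (Fin m → ZMod 2)) : Prop :=
  ∃ x : Fin n → ZMod 2, hammingNorm x ≤ k ∧ ab.1.mulVec x = ab.2

/-- Probability that `ψ(n,k,m)` is satisfiable. -/
noncomputable def satProb (n k m : ℕ) : ℝ := xorProb n m (cardXorSat n k m)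

/-- Probability that `ψ(n,k,m)` is unsatisfiable. -/
noncomputable def unsatProb (n k m : ℕ) : ℝ := xorProb n m fun ab => ¬ cardXorSat n k m ab

/-- `#F(n,k) = ∑_{w=0}^{k} C(n,w)`, the number of solutions of the at-most-`k`
cardinality constraint on `n` variables. -/
def cardSum (n k : ℕ) : ℕ := ∑ w ∈ Finset.range (k + 1), n.choose w

/-- The binary entropy function (with `H 0 = H 1 = 0` by `logb` junk values). -/
noncomputable def binEnt (μ : ℝ) : ℝ :=
  -μ * Real.logb 2 μ - (1 - μ) * Real.logb 2 (1 - μ)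

noncomputable def phiMap (n m : ℕ) (z : Fin n → ZMod 2) :
    Matrix (Fin m) (Fin n) (ZMod 2) →ₗ[ZMod 2] (Fin m → ZMod 2) where
  toFun A := A.mulVec z
  map_add' A B := Matrix.add_mulVec A B z
  map_smul' c A := Matrix.smul_mulVec c A z

lemma phiMap_surj (n m : ℕ) (z : Fin n → ZMod 2) (hz : z ≠ 0) :
    Function.Surjective (phiMap n m z) := by
  obtain ⟨j, hj⟩ := Function.ne_iff.mp hz
  rw [Pi.zero_apply] at hj
  have key : ∀ a : ZMod 2, a ≠ 0 → a = 1 := by decide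
  have hj1 : z j = 1 := key _ hj
  intro v
  refine ⟨fun i j' => if j' = j then v i else 0, ?_⟩
  funext i
  simp only [phiMap, LinearMap.coe_mk, AddHom.coe_mk, Matrix.mulVec, dotProduct]
  rw [Finset.sum_eq_single j]
  · simp [hj1]
  · intro b _ hb; simp [hb]
  · simp

lemma ker_card (n m : ℕ) (z : Fin n → ZMod 2) (hz : z ≠ 0) :
    Nat.card (LinearMap.ker (phiMap n m z)) * 2 ^ m = 2 ^ (m * n) := by
  have h1 := Submodule.card_eq_card_quotient_mul_card (LinearMap.ker (phiMap n m z))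
  have h2 : Nat.card (Matrix (Fin m) (Fin n) (ZMod 2) ⧸ LinearMap.ker (phiMap n m z)) =
      Nat.card (Fin m → ZMod 2) :=
    Nat.card_congr ((phiMap n m z).quotKerEquivOfSurjective (phiMap_surj n m z hz)).toEquiv
  have h3 : Nat.card (Matrix (Fin m) (Fin n) (ZMod 2)) = 2 ^ (m * n) := by
    rw [Nat.card_eq_fintype_card]
    show Fintype.card (Fin m → Fin n → ZMod 2) = _
    simp [pow_mul, mul_comm]
  have h4 : Nat.card (Fin m → ZMod 2) = 2 ^ m := by
    simp [Nat.card_eq_fintype_card]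
  rw [h2, h3, h4, mul_comm] at h1
  rw [Nat.mul_comm n m] at h1
  exact h1.symm

lemma filter_card (n m : ℕ) (x y : Fin n → ZMod 2) (hxy : x ≠ y) :
    Nat.card {ab : Matrix (Fin m) (Fin n) (ZMod 2) × (Fin m → ZMod 2) //
        ab.1.mulVec x = ab.2 ∧ ab.1.mulVec y = ab.2} =
      Nat.card (LinearMap.ker (phiMap n m (x - y))) := by
  apply Nat.card_congr
  refine ⟨fun p => ⟨p.1.1, ?_⟩, fun A => ⟨(A.1, A.1.mulVec x), ?_⟩, ?_, ?_⟩
  · obtain ⟨⟨A, b⟩, h1, h2⟩ := p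
    simp only [LinearMap.mem_ker, phiMap, LinearMap.coe_mk, AddHom.coe_mk]
    rw [Matrix.mulVec_sub, h1, h2, sub_self]
  · obtain ⟨A, hA⟩ := A
    refine ⟨rfl, ?_⟩
    simp only [LinearMap.mem_ker, phiMap, LinearMap.coe_mk, AddHom.coe_mk] at hA
    rw [Matrix.mulVec_sub, sub_eq_zero] at hA
    exact hA.symm
  · rintro ⟨⟨A, b⟩, h1, h2⟩
    simp only [Subtype.mk.injEq, Prod.mk.injEq]
    exact ⟨trivial, h1⟩
  · rintro ⟨A, hA⟩
    rfl

lemma card_filter_eq_nat_card {α : Type*} [Fintype α] (p : α → Prop) [inst : DecidablePred p] :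
    (@Finset.filter α p inst Finset.univ).card = Nat.card {a // p a} := by
  classical
  rw [Finset.filter_congr_decidable, ← Fintype.card_subtype, ← Nat.card_eq_fintype_card]

theorem stmt16 (n m : ℕ) (x y : Fin n → ZMod 2) (hxy : x ≠ y) :
    xorProb n m (fun ab => ab.1.mulVec x = ab.2 ∧ ab.1.mulVec y = ab.2) =
      (2 : ℝ) ^ (-(2 * m : ℤ)) := by
  have hz : x - y ≠ 0 := sub_ne_zero_of_ne hxy
  have hker := ker_card n m (x - y) hz
  unfold xorProb
  rw [card_filter_eq_nat_card, filter_card n m x y hxy]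
  have hcard : (Fintype.card (Matrix (Fin m) (Fin n) (ZMod 2) × (Fin m → ZMod 2)) : ℝ) =
      2 ^ (m * n) * 2 ^ m := by
    rw [Fintype.card_prod]
    push_cast
    congr 1
    · rw [show Fintype.card (Matrix (Fin m) (Fin n) (ZMod 2)) = 2 ^ (m * n) from by
        show Fintype.card (Fin m → Fin n → ZMod 2) = _
        simp [pow_mul, mul_comm]]
      push_cast; ring
    · simp
  rw [hcard]
  have hkR : (Nat.card (LinearMap.ker (phiMap n m (x - y))) : ℝ) * 2 ^ m = 2 ^ (m * n) := by
    exact_mod_cast hker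
  have hK0 : (Nat.card (LinearMap.ker (phiMap n m (x - y))) : ℝ) ≠ 0 :=
    Nat.cast_ne_zero.mpr Nat.card_pos.ne'
  rw [← hkR, zpow_neg, show ((2 * m : ℤ)) = ((2 * m : ℕ) : ℤ) by push_cast; ring, zpow_natCast]
  have hKpos : (0:ℝ) < (Nat.card (LinearMap.ker (phiMap n m (x - y))) : ℝ) :=
    hK0.symm.lt_of_le (Nat.cast_nonneg _)
  rw [two_mul, pow_add, inv_eq_one_div, div_eq_div_iff (by positivity) (by positivity)]
  ring
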